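/- Let G be a group. There exist a generic subset A ⊆ ℤ (viewed additively) and infinite sets B, C ⊆ ℤ witnessing failure of the sumset property: specifically, with B = {2x : x ∈ ℤ, x ≥ 0}, C = {2x : x ∈ ℤ, x < 0}, and A = B ∪ (C+1), the set A is generic in (ℤ,+) but there are no infinite B' ⊆ B and C' ⊆ C and no t ∈ ℤ with B' + C' ⊆ A + t. -/
import Mathlib


/-- `A` is generic in `(ℤ,+)` if finitely many translates of `A` cover `ℤ`. -/
def IsGenericInt (A : Set ℤ) : Prop :=
  ∃ F : Finset ℤ, ∀ x : ℤ, ∃ t ∈ F, x - t ∈ A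

lemma unbdd_below (S : Set ℤ) (hS : S.Infinite) (M : ℤ) (hub : ∀ x ∈ S, x ≤ M) :
    ∀ N : ℤ, ∃ x ∈ S, x < N := by
  intro N
  by_contra h
  push_neg at h
  exact hS (Set.Finite.subset (Set.finite_Icc N M) (fun x hx => ⟨h x hx, hub x hx⟩))

lemma unbdd_above (S : Set ℤ) (hS : S.Infinite) (M : ℤ) (hlb : ∀ x ∈ S, M ≤ x) :
    ∀ N : ℤ, ∃ x ∈ S, N < x := by
  intro N
  by_contra h
  push_neg at h
  exact hS (Set.Finite.subset (Set.finite_Icc M N) (fun x hx => ⟨hlb x hx, h x hx⟩))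

theorem sumset_fails_without_stability :
    let B : Set ℤ := {x | ∃ y : ℤ, 0 ≤ y ∧ x = 2 * y}
    let C : Set ℤ := {x | ∃ y : ℤ, y < 0 ∧ x = 2 * y}
    let A : Set ℤ := B ∪ {x | ∃ c ∈ C, x = c + 1}
    IsGenericInt A ∧
      ¬ ∃ (B' C' : Set ℤ) (t : ℤ), B' ⊆ B ∧ B'.Infinite ∧ C' ⊆ C ∧ C'.Infinite ∧
        ∀ b ∈ B', ∀ c ∈ C', ∃ a ∈ A, b + c = a + t := by
  intro B C A
  constructor
  · refine ⟨{0, 1}, fun x => ?_⟩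
    rcases Int.even_or_odd x with ⟨k, hk⟩ | ⟨k, hk⟩
    · rcases le_or_gt 0 k with hk0 | hk0
      · exact ⟨0, by simp, Or.inl ⟨k, hk0, by omega⟩⟩
      · exact ⟨1, by simp, Or.inr ⟨2 * (k - 1), ⟨k - 1, by omega, rfl⟩, by omega⟩⟩
    · rcases le_or_gt 0 k with hk0 | hk0
      · exact ⟨1, by simp, Or.inl ⟨k, hk0, by omega⟩⟩
      · exact ⟨0, by simp, Or.inr ⟨2 * k, ⟨k, hk0, rfl⟩, by omega⟩⟩
  · rintro ⟨B', C', t, hB'B, hB'inf, hC'C, hC'inf, hsum⟩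
    -- pick some b0 ∈ B', c0 ∈ C'
    obtain ⟨b0, hb0⟩ := hB'inf.nonempty
    obtain ⟨c0, hc0⟩ := hC'inf.nonempty
    rcases Int.even_or_odd t with ⟨s, hs⟩ | ⟨s, hs⟩
    · -- t even: b+c-t ∈ A must be even hence in B, so b+c ≥ t; contradict C' unbdd below
      obtain ⟨c, hcC', hclt⟩ := unbdd_below C' hC'inf 0
        (fun x hx => by obtain ⟨y, hy, rfl⟩ := hC'C hx; omega) (t - b0)
      obtain ⟨a, ha, hab⟩ := hsum b0 hb0 c hcC'
      obtain ⟨y, hy, rfl⟩ := hB'B hb0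
      obtain ⟨z, hz, rfl⟩ := hC'C hcC'
      rcases ha with ⟨w, hw, hweq⟩ | ⟨cc, ⟨w, hw, hweq⟩, haeq⟩
      · omega
      · omega
    · -- t odd: b+c-t must be odd hence in C+1, so b+c ≤ t; contradict B' unbdd above
      obtain ⟨b, hbB', hbgt⟩ := unbdd_above B' hB'inf 0
        (fun x hx => by obtain ⟨y, hy, rfl⟩ := hB'B hx; omega) (t - c0)
      obtain ⟨a, ha, hab⟩ := hsum b hbB' c0 hc0
      obtain ⟨y, hy, rfl⟩ := hB'B hbB'
      obtain ⟨z, hz, rfl⟩ := hC'C hc0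
      rcases ha with ⟨w, hw, hweq⟩ | ⟨cc, ⟨w, hw, hweq⟩, haeq⟩
      · omega
      · omega
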